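/- (i) Let X be a realcompact space and let S ⊆ X be a Baire set of X, i.e. a member of the σ-algebra on X generated by the zero-sets of X. Then the subspace S of X is realcompact. (ii) Let X be an ℕ-compact space and let S ⊆ X be a zero-Baire set of X, i.e. a member of the σ-algebra on X generated by the clopen subsets of X. Then the subspace S of X is ℕ-compact. -/

import Mathlib

open Topology TopologicalSpace Set MeasureTheory

universe u

/-- `X` is `E`-compact if it is homeomorphic to a closed subspace of a power `E^J`
for some nonempty index set `J`. -/
def IsECompact (E : Type*) (X : Type u)
    [TopologicalSpace E] [TopologicalSpace X] : Prop :=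
  ∃ (J : Type u) (_ : Nonempty J) (e : X → J → E),
    IsEmbedding e ∧ IsClosed (Set.range e)

/-- A zero-set of `X` is a set of the form `f ⁻¹' {0}` for a continuous
`f : X → ℝ`. -/
def IsZeroSet {X : Type*} [TopologicalSpace X] (Z : Set X) : Prop :=
  ∃ f : X → ℝ, Continuous f ∧ Z = f ⁻¹' {0}

namespace ECompactAux

/-- Product of closed embeddings is a closed embedding. -/
lemma isClosedEmbedding_prodMap {X Y Z W : Type*} [TopologicalSpace X]
    [TopologicalSpace Y] [TopologicalSpace Z] [TopologicalSpace W] {f : X → Y} {g : Z → W}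
    (hf : IsClosedEmbedding f) (hg : IsClosedEmbedding g) :
    IsClosedEmbedding (Prod.map f g) := by
  refine ⟨hf.toIsEmbedding.prodMap hg.toIsEmbedding, ?_⟩
  rw [Set.range_prodMap]
  exact hf.isClosed_range.prod hg.isClosed_range

/-- Every member of the σ-algebra generated by sets of the form `χ ⁻¹' T` for continuous
`χ : X → E` is the preimage of some subset of `E ^ ℕ` under a continuous map `X → E ^ ℕ`. -/
lemma exists_preimage {X : Type u} [TopologicalSpace X] {E : Type}
    [TopologicalSpace E] [Nonempty E] {G : Set (Set X)}
    (hG : ∀ Z ∈ G, ∃ χ : X → E, Continuous χ ∧ ∃ T : Set E, Z = χ ⁻¹' T)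
    (S : Set X) (hS : MeasurableSet[MeasurableSpace.generateFrom G] S) :
    ∃ g : X → ℕ → E, Continuous g ∧ ∃ B : Set (ℕ → E), S = g ⁻¹' B := by
  induction S, hS using MeasurableSpace.generateFrom_induction with
  | hC Z hZ _ =>
    obtain ⟨χ, hχ, T, hT⟩ := hG Z hZ
    exact ⟨fun x _ => χ x, continuous_pi fun _ => hχ, {h | h 0 ∈ T}, by
      ext x; simp [hT]⟩
  | empty =>
    exact ⟨fun _ _ => Classical.arbitrary E, continuous_const, ∅, by simp⟩
  | compl t ht ih =>
    obtain ⟨g, hg, B, hB⟩ := ih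
    exact ⟨g, hg, Bᶜ, by rw [hB, Set.preimage_compl]⟩
  | iUnion s hs ih =>
    choose g hg B hB using ih
    -- encode `ℕ × ℕ` into `ℕ`
    let π : ℕ ≃ ℕ × ℕ := (Denumerable.eqv (ℕ × ℕ)).symm
    refine ⟨fun x k => g (π k).1 x (π k).2,
      continuous_pi fun k => (continuous_apply (π k).2).comp (hg (π k).1),
      {h : ℕ → E | ∃ n, (fun m => h (π.symm (n, m))) ∈ B n}, ?_⟩
    ext x
    simp only [Set.mem_iUnion, Set.mem_preimage, Set.mem_setOf_eq]
    refine exists_congr fun n => ?_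
    have : (fun m => g (π (π.symm (n, m))).1 x (π (π.symm (n, m))).2) = g n x := by
      funext m; simp
    rw [this, ← Set.mem_preimage, ← hB n]

variable {E : Type} [TopologicalSpace E]

/-- The evaluation map into the power indexed by all continuous functions is an embedding. -/
lemma isEmbedding_eval {B : Set (ℕ → E)} :
    IsEmbedding (fun (y : ↥B) (f : C(↥B, E)) => f y) := by
  set e : ↥B → C(↥B, E) → E := fun y f => f y
  have hcont : Continuous e := continuous_pi fun f => f.continuous
  set r : (C(↥B, E) → E) → ℕ → E := fun q n => q ⟨fun y => (y : ℕ → E) n,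
    (continuous_apply n).comp continuous_subtype_val⟩ with hr
  have hrcont : Continuous r := continuous_pi fun n => continuous_apply _
  have hcomp : r ∘ e = (Subtype.val : ↥B → ℕ → E) := rfl
  exact IsEmbedding.of_comp hcont hrcont (hcomp ▸ IsEmbedding.subtypeVal)

/-- Basic approximation property of points in the closure of the range of the evaluation map. -/
lemma approx {B : Set (ℕ → E)} {p : C(↥B, E) → E}
    (hp : p ∈ closure (Set.range (fun (y : ↥B) (f : C(↥B, E)) => f y)))
    {ι : Type} (F : Finset ι) (φ : ι → C(↥B, E)) (U : ι → Set E)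
    (hU : ∀ i ∈ F, IsOpen (U i)) (hpU : ∀ i ∈ F, p (φ i) ∈ U i) :
    ∃ y : ↥B, ∀ i ∈ F, φ i y ∈ U i := by
  set V : Set (C(↥B, E) → E) := ⋂ i ∈ F, (fun q => q (φ i)) ⁻¹' U i with hV
  have hVopen : IsOpen V :=
    isOpen_biInter_finset fun i hi => (hU i hi).preimage (continuous_apply _)
  have hpV : p ∈ V := by
    simp only [hV, Set.mem_iInter, Set.mem_preimage]
    exact hpU
  rcases mem_closure_iff.mp hp V hVopen hpV with ⟨q, hqV, y, rfl⟩
  simp only [hV, Set.mem_iInter, Set.mem_preimage] at hqV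
  exact ⟨y, hqV⟩

/-- The Lindelöf step: if every countable family of continuous functions admits a common
point realizing `p`, then `p` is in the range of the evaluation map. -/
lemma wrap [T2Space E] [SecondCountableTopology E] {B : Set (ℕ → E)} {p : C(↥B, E) → E}
    (core : ∀ f : ℕ → C(↥B, E), ∃ y : ↥B, ∀ n, f n y = p (f n)) :
    p ∈ Set.range (fun (y : ↥B) (f : C(↥B, E)) => f y) := by
  by_contra hpr
  have hcov : ∀ y : ↥B, ∃ f : C(↥B, E), f y ≠ p f := by
    intro y
    by_contra h
    push_neg at h
    exact hpr ⟨y, funext h⟩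
  have hopen : ∀ f : C(↥B, E), IsOpen {y : ↥B | f y ≠ p f} :=
    fun f => isOpen_compl_iff.mpr (isClosed_eq f.continuous continuous_const)
  have hcover : (Set.univ : Set ↥B) ⊆ ⋃ f : C(↥B, E), {y : ↥B | f y ≠ p f} := by
    intro y _
    obtain ⟨f, hf⟩ := hcov y
    exact Set.mem_iUnion.mpr ⟨f, hf⟩
  obtain ⟨t, htc, htcov⟩ := isLindelof_univ.elim_countable_subcover _ hopen hcover
  obtain ⟨y0, -⟩ := core (fun _ => ⟨fun y => (y : ℕ → E) 0,
    (continuous_apply 0).comp continuous_subtype_val⟩)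
  have htne : t.Nonempty := by
    rcases t.eq_empty_or_nonempty with rfl | h
    · simpa using htcov (Set.mem_univ y0)
    · exact h
  obtain ⟨f, rfl⟩ := htc.exists_eq_range htne
  obtain ⟨y, hy⟩ := core f
  have := htcov (Set.mem_univ y)
  simp only [Set.mem_iUnion] at this
  obtain ⟨g', ⟨n, rfl⟩, hgy⟩ := this
  exact hgy (hy n)

/-- Every subspace of `ℝ ^ ℕ` is realcompact. -/
lemma keyR (B : Set (ℕ → ℝ)) :
    ∃ e : ↥B → C(↥B, ℝ) → ℝ, IsClosedEmbedding e := by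
  refine ⟨fun y f => f y, isEmbedding_eval, isClosed_of_closure_subset ?_⟩
  intro p hp
  refine wrap ?_
  intro f
  by_contra hc
  push_neg at hc
  letI : MetricSpace (ℕ → ℝ) := TopologicalSpace.metrizableSpaceMetric _
  set Y := ↥B
  set q : ℕ → ℝ := fun n => p (f n) with hq
  set g : Y → ℕ → ℝ := fun y n => f n y - q n with hgdef
  have hg : Continuous g := continuous_pi fun n => ((f n).continuous.sub continuous_const)
  have hgne : ∀ y, g y ≠ 0 := by
    intro y h
    obtain ⟨n, hn⟩ := hc y
    exact hn (by have := congrFun h n; simpa [hgdef, sub_eq_zero] using this)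
  set d : Y → ℝ := fun y => dist (g y) 0 with hd
  have hdc : Continuous d := hg.dist continuous_const
  have hdpos : ∀ y, 0 < d y := fun y => dist_pos.mpr (hgne y)
  set dC : C(Y, ℝ) := ⟨d, hdc⟩ with hdC
  have hdCy : ∀ y, dC y = d y := fun _ => rfl
  set GC : C(Y, ℝ) := ⟨fun y => (d y)⁻¹, hdc.inv₀ fun y => (hdpos y).ne'⟩ with hGC
  have hGCy : ∀ y, GC y = (d y)⁻¹ := fun _ => rfl
  have habs : ∀ c r : ℝ, IsOpen {t : ℝ | |t - c| < r} := by
    intro c r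
    have : {t : ℝ | |t - c| < r} = Metric.ball c r := by
      ext t; simp [Metric.mem_ball, Real.dist_eq]
    rw [this]; exact Metric.isOpen_ball
  -- `p dC = 0`
  have hple : ∀ η : ℝ, 0 < η → p dC < η := by
    intro η hη
    have hball : IsOpen (Metric.ball (0 : ℕ → ℝ) (η / 2)) := Metric.isOpen_ball
    have h0mem : (0 : ℕ → ℝ) ∈ Metric.ball (0 : ℕ → ℝ) (η / 2) := by
      simp [Metric.mem_ball, half_pos hη]
    obtain ⟨I, u, hu, huball⟩ := isOpen_pi_iff.mp hball 0 h0mem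
    set φ : Option ℕ → C(Y, ℝ) := fun o => o.elim dC f with hφ
    set W : Option ℕ → Set ℝ := fun o =>
      o.elim {t : ℝ | |t - p dC| < η / 2} (fun n => (fun t => t - q n) ⁻¹' u n) with hW
    have hWopen : ∀ o ∈ insert none (I.image some), IsOpen (W o) := by
      rintro (_ | n) ho
      · exact habs _ _
      · simp only [Finset.mem_insert, Finset.mem_image] at ho
        obtain ⟨m, hm, hmn⟩ := ho.resolve_left (by simp)
        cases Option.some.inj hmn
        exact (hu n hm).1.preimage (continuous_id.sub continuous_const)
    have hpW : ∀ o ∈ insert none (I.image some), p (φ o) ∈ W o := by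
      rintro (_ | n) ho
      · simp [hW, hφ, half_pos hη]
      · simp only [Finset.mem_insert, Finset.mem_image] at ho
        obtain ⟨m, hm, hmn⟩ := ho.resolve_left (by simp)
        cases Option.some.inj hmn
        simpa [hW, hφ, hq] using (hu n hm).2
    obtain ⟨y, hy⟩ := approx hp (insert none (I.image some)) φ W hWopen hpW
    have hdy : d y < η / 2 := by
      have hgmem : g y ∈ (I : Set ℕ).pi u := by
        intro n hn
        have := hy (some n) (Finset.mem_insert_of_mem (Finset.mem_image_of_mem some hn))
        simpa [hW, hφ, hgdef] using this
      have := huball hgmem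
      simpa [hd, Metric.mem_ball] using this
    have hpd : |d y - p dC| < η / 2 := by
      have := hy none (Finset.mem_insert_self _ _)
      simpa [hW, hφ, hdCy] using this
    have h3 := abs_lt.mp hpd
    linarith [h3.1, h3.2]
  have hpge : ∀ η : ℝ, 0 < η → -η < p dC := by
    intro η hη
    obtain ⟨y, hy⟩ := approx hp {()} (fun _ => dC) (fun _ => {t : ℝ | |t - p dC| < η})
      (fun _ _ => habs _ _) (fun _ _ => by simp [hη])
    have := hy () (by simp)
    simp only [Set.mem_setOf_eq, hdCy] at this
    have h3 := abs_lt.mp this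
    have h4 := hdpos y
    linarith [h3.1, h3.2]
  have hp0 : p dC = 0 := by
    by_contra h
    rcases lt_or_gt_of_ne h with h' | h'
    · have := hpge (-(p dC)) (by linarith)
      linarith
    · exact absurd (hple _ h') (lt_irrefl _)
  -- final contradiction using `GC`
  set M := p GC with hM
  have hpos2 : (0 : ℝ) < (|M| + 2)⁻¹ := by positivity
  obtain ⟨y, hy⟩ := approx hp Finset.univ
    (fun b : Bool => if b then dC else GC)
    (fun b => if b then {t : ℝ | |t - p dC| < (|M| + 2)⁻¹} else {t : ℝ | |t - M| < 1})
    (fun b _ => by cases b <;> simpa using habs _ _)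
    (fun b _ => by cases b <;> simp [hpos2, ← hM])
  have h1 : |d y - p dC| < (|M| + 2)⁻¹ := by
    have := hy true (Finset.mem_univ _)
    simpa [hdCy] using this
  have h2 : |(d y)⁻¹ - M| < 1 := by
    have := hy false (Finset.mem_univ _)
    simpa [hGCy] using this
  rw [hp0, sub_zero] at h1
  have hdy := hdpos y
  have hdlt : d y < (|M| + 2)⁻¹ := by
    have := abs_lt.mp h1; linarith [this.2]
  have hinv : |M| + 2 < (d y)⁻¹ := by
    have := one_div_lt_one_div_of_lt hdy hdlt
    rw [one_div, one_div, inv_inv] at this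
    exact this
  have hub : (d y)⁻¹ < M + 1 := by
    have := abs_lt.mp h2; linarith [this.2]
  have := le_abs_self M
  linarith

/-- Every subspace of `ℕ ^ ℕ` is `ℕ`-compact. -/
lemma keyN (B : Set (ℕ → ℕ)) :
    ∃ e : ↥B → C(↥B, ℕ) → ℕ, IsClosedEmbedding e := by
  refine ⟨fun y f => f y, isEmbedding_eval, isClosed_of_closure_subset ?_⟩
  intro p hp
  refine wrap ?_
  intro f
  by_contra hc
  push_neg at hc
  set Y := ↥B
  have hF : ∀ y : Y, ∃ n, f n y ≠ p (f n) := hc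
  set F : Y → ℕ := fun y => Nat.find (hF y) with hFdef
  have hfib : ∀ n : ℕ, IsOpen {y : Y | F y = n} := by
    intro n
    have hEq : {y : Y | F y = n} =
        ((f n) ⁻¹' {p (f n)})ᶜ ∩ ⋂ m ∈ Finset.range n, (f m) ⁻¹' {p (f m)} := by
      ext y
      simp only [Set.mem_setOf_eq, hFdef, Nat.find_eq_iff, Set.mem_inter_iff, Set.mem_compl_iff,
        Set.mem_preimage, Set.mem_singleton_iff, Set.mem_iInter, Finset.mem_range, not_not]
    rw [hEq, ← Set.preimage_compl]
    exact ((isOpen_discrete _).preimage (f n).continuous).inter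
      (isOpen_biInter_finset fun m _ => (isOpen_discrete _).preimage (f m).continuous)
  have hFc : Continuous F :=
    (IsLocallyConstant.iff_isOpen_fiber.mpr hfib).continuous
  set FC : C(Y, ℕ) := ⟨F, hFc⟩ with hFC
  set m := p FC with hm
  obtain ⟨y, hy⟩ := approx hp Finset.univ
    (fun b : Bool => if b then FC else f m)
    (fun b => if b then ({m} : Set ℕ) else {p (f m)})
    (fun b _ => isOpen_discrete _)
    (fun b _ => by cases b <;> simp [← hm])
  have h1 : F y = m := by simpa [hFC] using hy true (Finset.mem_univ _)
  have h2 : f m y = p (f m) := by simpa using hy false (Finset.mem_univ _)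
  have := Nat.find_spec (hF y)
  rw [show Nat.find (hF y) = F y from rfl, h1] at this
  exact this h2

/-- Assembly: preimage of a set `B ⊆ E ^ ℕ` (whose subspace is `E`-compact) under a
continuous map from an `E`-compact space is `E`-compact. -/
lemma assemble {X : Type u} [TopologicalSpace X] {E : Type}
    [TopologicalSpace E] [T2Space E]
    (hX : IsECompact E X) {g : X → ℕ → E} (hg : Continuous g) {B : Set (ℕ → E)}
    {eB : ↥B → C(↥B, E) → E} (heB : IsClosedEmbedding eB) :
    IsECompact E ↥(g ⁻¹' B) := by
  obtain ⟨J, hJ, e₁, he₁, hcl₁⟩ := hX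
  set m : ↥(g ⁻¹' B) → X × ↥B := fun s => (s.1, ⟨g s.1, s.2⟩) with hm
  have hmc : Continuous m := continuous_subtype_val.prodMk
    ((hg.comp continuous_subtype_val).subtype_mk _)
  have hmemb : IsEmbedding m := by
    have hcomp : Prod.fst ∘ m = (Subtype.val : ↥(g ⁻¹' B) → X) := rfl
    exact IsEmbedding.of_comp hmc continuous_fst (hcomp ▸ IsEmbedding.subtypeVal)
  have hmrange : Set.range m = {z : X × ↥B | g z.1 = z.2.1} := by
    ext z
    constructor
    · rintro ⟨s, rfl⟩; rfl
    · intro hz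
      have hz1 : z.1 ∈ g ⁻¹' B := by rw [Set.mem_preimage, hz]; exact z.2.2
      refine ⟨⟨z.1, hz1⟩, ?_⟩
      exact Prod.ext rfl (Subtype.ext hz)
  have hmcl : IsClosedEmbedding m := ⟨hmemb, by
    rw [hmrange]
    exact isClosed_eq (hg.comp continuous_fst) (continuous_subtype_val.comp continuous_snd)⟩
  have hP : IsClosedEmbedding (Prod.map e₁ eB) :=
    isClosedEmbedding_prodMap ⟨he₁, hcl₁⟩ heB
  let H : (J → E) × (C(↥B, E) → E) ≃ₜ (J ⊕ ULift.{u} (C(↥B, E)) → E) :=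
    (Homeomorph.prodCongr (Homeomorph.refl _)
      (Homeomorph.piCongrLeft (Y := fun _ => E) (Equiv.ulift.symm))).trans
      Homeomorph.sumArrowHomeomorphProdArrow.symm
  have total : IsClosedEmbedding (H ∘ (Prod.map e₁ eB) ∘ m) :=
    H.isClosedEmbedding.comp (hP.comp hmcl)
  exact ⟨J ⊕ ULift.{u} (C(↥B, E)), ⟨Sum.inl hJ.some⟩, _, total.toIsEmbedding,
    total.isClosed_range⟩

end ECompactAux

/-- (i) Every Baire set (member of the σ-algebra generated by the zero-sets) of a
realcompact space is realcompact as a subspace.  (ii) Every zero-Baire set (member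
of the σ-algebra generated by the clopen sets) of an `ℕ`-compact space is
`ℕ`-compact as a subspace. -/
theorem stmt15 {X : Type u} [TopologicalSpace X] :
    (IsECompact ℝ X → ∀ S : Set X,
      MeasurableSet[MeasurableSpace.generateFrom {Z : Set X | IsZeroSet Z}] S →
        IsECompact ℝ ↥S) ∧
    (IsECompact ℕ X → ∀ S : Set X,
      MeasurableSet[MeasurableSpace.generateFrom {Z : Set X | IsClopen Z}] S →
        IsECompact ℕ ↥S) := by
  constructor
  · intro hX S hS
    obtain ⟨g, hg, B, hB⟩ := ECompactAux.exists_preimage (E := ℝ)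
      (fun Z hZ => by
        obtain ⟨f, hf, h0⟩ := hZ
        exact ⟨f, hf, {0}, h0⟩) S hS
    obtain ⟨eB, heB⟩ := ECompactAux.keyR B
    subst hB
    exact ECompactAux.assemble hX hg heB
  · intro hX S hS
    obtain ⟨g, hg, B, hB⟩ := ECompactAux.exists_preimage (E := ℕ)
      (fun Z hZ => by
        classical
        refine ⟨fun x => if x ∈ Z then 0 else 1, ?_, {0}, ?_⟩
        · refine (IsLocallyConstant.iff_isOpen_fiber.mpr ?_).continuous
          intro n
          match n with
          | 0 =>
            have : (fun x : X => if x ∈ Z then 0 else 1) ⁻¹' {0} = Z := by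
              ext x; by_cases h : x ∈ Z <;> simp [h]
            rw [this]; exact hZ.2
          | 1 =>
            have : (fun x : X => if x ∈ Z then 0 else 1) ⁻¹' {1} = Zᶜ := by
              ext x; by_cases h : x ∈ Z <;> simp [h]
            rw [this]; exact hZ.1.isOpen_compl
          | (n + 2) =>
            have : (fun x : X => if x ∈ Z then 0 else 1) ⁻¹' {n + 2} = ∅ := by
              ext x; by_cases h : x ∈ Z <;> simp [h]
            rw [this]; exact isOpen_empty
        · ext x; by_cases h : x ∈ Z <;> simp [h]) S hS
    obtain ⟨eB, heB⟩ := ECompactAux.keyN B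
    subst hB
    exact ECompactAux.assemble hX hg heB
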